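/- Let G be a connected finite simple graph of order n ≥ 12 in which every pair of distinct nonadjacent vertices has degree sum at least n − 2, and suppose m(G,2) > 2. Let I be a set of maximum cardinality among all closures ⟨A⟩ of two-element sets A ⊆ V(G) under 2-neighbor bootstrap percolation, and let U = V(G) ∖ I. If v ∈ I has at least two neighbors in U, then N(v) ∩ I is an independent set in G. -/

import Mathlib

open Finset
open scoped Classical

/-- One step of the `r`-neighbor bootstrap percolation process: all currently
active vertices stay active, and every vertex with at least `r` active
neighbors becomes active. -/
noncomputable def bootStep {V : Type*} [Fintype V] (G : SimpleGraph V) (r : ℕ)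
    (A : Finset V) : Finset V :=
  A ∪ Finset.univ.filter (fun v => r ≤ (G.neighborFinset v ∩ A).card)

/-- The closure of `A` under `r`-neighbor bootstrap percolation, i.e. `⋃ₜ Aₜ`.
Since the process is monotone on a finite vertex set, iterating `|V|` times
reaches the fixed point. -/
noncomputable def bootClosure {V : Type*} [Fintype V] (G : SimpleGraph V) (r : ℕ)
    (A : Finset V) : Finset V :=
  (bootStep G r)^[Fintype.card V] A

/-- `G` `r`-percolates from the initially active set `A`. -/
def Percolates {V : Type*} [Fintype V] (G : SimpleGraph V) (r : ℕ)
    (A : Finset V) : Prop :=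
  ∃ t : ℕ, (bootStep G r)^[t] A = Finset.univ

/-- `m(G, r)`: the minimum size of an `r`-contagious set in `G`. -/
noncomputable def minContagious {V : Type*} [Fintype V] (G : SimpleGraph V) (r : ℕ) : ℕ :=
  sInf {k : ℕ | ∃ A : Finset V, A.card = k ∧ Percolates G r A}

section helpers

variable {V : Type*} [Fintype V] {G : SimpleGraph V} {r : ℕ}

lemma subset_bootStep (A : Finset V) : A ⊆ bootStep G r A := Finset.subset_union_left

lemma subset_bootClosure (A : Finset V) : A ⊆ bootClosure G r A := by
  have h : ∀ k (B : Finset V), B ⊆ (bootStep G r)^[k] B := by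
    intro k
    induction k with
    | zero => intro B; simp
    | succ k ih =>
      intro B
      rw [Function.iterate_succ_apply]
      exact (subset_bootStep B).trans (ih _)
  exact h _ A

lemma bootStep_bootClosure (A : Finset V) :
    bootStep G r (bootClosure G r A) = bootClosure G r A := by
  have hinfl : ∀ B : Finset V, B ⊆ bootStep G r B := subset_bootStep
  have hfix : ∀ B : Finset V, bootStep G r B = B → ∀ j, (bootStep G r)^[j] B = B := by
    intro B hB j
    induction j with
    | zero => rfl
    | succ j ih => rw [Function.iterate_succ_apply', ih, hB]
  by_cases h : ∃ k < Fintype.card V, bootStep G r ((bootStep G r)^[k] A) = (bootStep G r)^[k] A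
  · obtain ⟨k, hk, hke⟩ := h
    have h2 : (bootStep G r)^[Fintype.card V] A = (bootStep G r)^[k] A := by
      have h3 := hfix _ hke (Fintype.card V - k)
      calc (bootStep G r)^[Fintype.card V] A
          = (bootStep G r)^[Fintype.card V - k] ((bootStep G r)^[k] A) := by
            rw [← Function.iterate_add_apply]; congr 1; omega
        _ = (bootStep G r)^[k] A := h3
    show bootStep G r ((bootStep G r)^[Fintype.card V] A) = (bootStep G r)^[Fintype.card V] A
    rw [h2, hke]
  · push_neg at h
    have hcard : ∀ k ≤ Fintype.card V, k + A.card ≤ ((bootStep G r)^[k] A).card := by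
      intro k
      induction k with
      | zero => simp
      | succ k ih =>
        intro hk
        have h1 := ih (by omega)
        have h2 : (bootStep G r)^[k] A ⊂ (bootStep G r)^[k + 1] A := by
          rw [Function.iterate_succ_apply']
          exact (hinfl _).ssubset_of_ne (Ne.symm (h k (by omega)))
        have h3 := Finset.card_lt_card h2
        omega
    have h1 := hcard (Fintype.card V) le_rfl
    have h2 : ((bootStep G r)^[Fintype.card V] A).card ≤ Fintype.card V := by
      simpa using Finset.card_le_univ ((bootStep G r)^[Fintype.card V] A)
    have h3 : (bootStep G r)^[Fintype.card V] A = Finset.univ :=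
      Finset.eq_univ_of_card _ (by omega)
    show bootStep G r ((bootStep G r)^[Fintype.card V] A) = (bootStep G r)^[Fintype.card V] A
    rw [h3]
    exact Finset.Subset.antisymm (Finset.subset_univ _) (hinfl _)

lemma mem_bootClosure_of_nbrs {A : Finset V} {w : V}
    (hw : r ≤ (G.neighborFinset w ∩ bootClosure G r A).card) : w ∈ bootClosure G r A := by
  rw [← bootStep_bootClosure A]
  exact Finset.mem_union_right _ (Finset.mem_filter.mpr ⟨Finset.mem_univ _, hw⟩)

end helpers


theorem stmt10 {V : Type*} [Fintype V] (G : SimpleGraph V)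
    (hconn : G.Connected) (hn : 12 ≤ Fintype.card V)
    (hdeg : ∀ x y : V, x ≠ y → ¬ G.Adj x y →
      Fintype.card V - 2 ≤ G.degree x + G.degree y)
    (hm : 2 < minContagious G 2)
    (I : Finset V)
    (hIcl : ∃ A : Finset V, A.card = 2 ∧ I = bootClosure G 2 A)
    (hImax : ∀ A : Finset V, A.card = 2 → (bootClosure G 2 A).card ≤ I.card)
    (v : V) (hv : v ∈ I)
    (hv2 : 2 ≤ (G.neighborFinset v ∩ (Finset.univ \ I)).card) :
    ∀ a ∈ G.neighborFinset v ∩ I, ∀ b ∈ G.neighborFinset v ∩ I, ¬ G.Adj a b := by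
  classical
  intro a ha b hb hab
  obtain ⟨A0, hA0, hIdef⟩ := hIcl
  -- closedness of I
  have hIclosed : ∀ w : V, 2 ≤ (G.neighborFinset w ∩ I).card → w ∈ I := by
    intro w hw
    rw [hIdef] at hw ⊢
    exact mem_bootClosure_of_nbrs hw
  have hU1 : ∀ u : V, u ∉ I → (G.neighborFinset u ∩ I).card ≤ 1 := by
    intro u hu
    by_contra hc
    exact hu (hIclosed u (by omega))
  -- closure facts for arbitrary pairs
  have key : ∀ (s : Finset V) (w : V),
      2 ≤ (G.neighborFinset w ∩ bootClosure G 2 s).card → w ∈ bootClosure G 2 s :=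
    fun s w h => mem_bootClosure_of_nbrs h
  have seed : ∀ (s : Finset V), s ⊆ bootClosure G 2 s := fun s => subset_bootClosure s
  -- two-membership card lemma
  have two_le : ∀ (s : Finset V) (x y : V), x ∈ s → y ∈ s → x ≠ y → 2 ≤ s.card := by
    intro s x y hx hy hxy
    exact Finset.one_lt_card.mpr ⟨x, hx, y, hy, hxy⟩
  -- basic memberships
  have haN : a ∈ G.neighborFinset v := (Finset.mem_inter.mp ha).1
  have haI : a ∈ I := (Finset.mem_inter.mp ha).2
  have hbN : b ∈ G.neighborFinset v := (Finset.mem_inter.mp hb).1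
  have hbI : b ∈ I := (Finset.mem_inter.mp hb).2
  have hva : G.Adj v a := (SimpleGraph.mem_neighborFinset _ _ _).mp haN
  have hvb : G.Adj v b := (SimpleGraph.mem_neighborFinset _ _ _).mp hbN
  -- two neighbours in U
  obtain ⟨u1, hu1m, u2, hu2m, hu12⟩ :=
    Finset.one_lt_card.mp (by omega : 1 < (G.neighborFinset v ∩ (Finset.univ \ I)).card)
  have hvu1 : G.Adj v u1 :=
    (SimpleGraph.mem_neighborFinset _ _ _).mp (Finset.mem_inter.mp hu1m).1
  have hvu2 : G.Adj v u2 :=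
    (SimpleGraph.mem_neighborFinset _ _ _).mp (Finset.mem_inter.mp hu2m).1
  have hu1I : u1 ∉ I := (Finset.mem_sdiff.mp (Finset.mem_inter.mp hu1m).2).2
  have hu2I : u2 ∉ I := (Finset.mem_sdiff.mp (Finset.mem_inter.mp hu2m).2).2
  -- cardinalities
  have hUn : (Finset.univ \ I).card + I.card = Fintype.card V := by
    rw [Finset.card_sdiff_add_card, Finset.union_eq_left.mpr (Finset.subset_univ I),
      Finset.card_univ]
  have hU2 : 2 ≤ (Finset.univ \ I).card :=
    le_trans hv2 (Finset.card_le_card Finset.inter_subset_right)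
  have hIsd : ∀ s : Finset V, s ∩ (Finset.univ \ I) = s \ I := by
    intro s; ext x; simp
  -- degree splitting
  have hsplit : ∀ (x : V) (s : Finset V),
      (G.neighborFinset x ∩ s).card + (G.neighborFinset x \ s).card = G.degree x := by
    intro x s
    rw [Finset.card_inter_add_card_sdiff]
    rfl
  -- common neighbour counting for non-adjacent pairs outside I
  have pairD : ∀ u u' : V, u ∉ I → u' ∉ I → u ≠ u' → ¬ G.Adj u u' →
      I.card ≤ ((G.neighborFinset u ∩ G.neighborFinset u') ∩ (Finset.univ \ I)).card + 2 := by
    intro u u' hu hu' hne hnadj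
    have hXY : (G.neighborFinset u ∩ (Finset.univ \ I)) ∪ (G.neighborFinset u' ∩ (Finset.univ \ I))
        ⊆ (Finset.univ \ I) \ {u, u'} := by
      intro x hx
      have hxU : x ∈ Finset.univ \ I := by
        rcases Finset.mem_union.mp hx with h | h
        · exact (Finset.mem_inter.mp h).2
        · exact (Finset.mem_inter.mp h).2
      refine Finset.mem_sdiff.mpr ⟨hxU, ?_⟩
      simp only [Finset.mem_insert, Finset.mem_singleton]
      push_neg
      constructor
      · rintro rfl
        rcases Finset.mem_union.mp hx with h | h
        · exact G.loopless.irrefl x ((SimpleGraph.mem_neighborFinset _ _ _).mp (Finset.mem_inter.mp h).1)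
        · exact hnadj (((SimpleGraph.mem_neighborFinset _ _ _).mp (Finset.mem_inter.mp h).1).symm)
      · rintro rfl
        rcases Finset.mem_union.mp hx with h | h
        · exact hnadj ((SimpleGraph.mem_neighborFinset _ _ _).mp (Finset.mem_inter.mp h).1)
        · exact G.loopless.irrefl x ((SimpleGraph.mem_neighborFinset _ _ _).mp (Finset.mem_inter.mp h).1)
    have hpair : ({u, u'} : Finset V) ⊆ Finset.univ \ I := by
      intro x hx
      rcases Finset.mem_insert.mp hx with rfl | hx
      · exact Finset.mem_sdiff.mpr ⟨Finset.mem_univ _, hu⟩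
      · rw [Finset.mem_singleton.mp hx]
        exact Finset.mem_sdiff.mpr ⟨Finset.mem_univ _, hu'⟩
    have hc2 : ((Finset.univ \ I) \ {u, u'}).card = (Finset.univ \ I).card - 2 := by
      rw [Finset.card_sdiff_of_subset hpair, Finset.card_pair hne]
    have hcard_le := Finset.card_le_card hXY
    have hXuY := Finset.card_union_add_card_inter
      (G.neighborFinset u ∩ (Finset.univ \ I)) (G.neighborFinset u' ∩ (Finset.univ \ I))
    have hXiY : (G.neighborFinset u ∩ (Finset.univ \ I)) ∩ (G.neighborFinset u' ∩ (Finset.univ \ I))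
        = (G.neighborFinset u ∩ G.neighborFinset u') ∩ (Finset.univ \ I) := by
      ext x; simp only [Finset.mem_inter]; tauto
    rw [hXiY] at hXuY
    have hdu := hsplit u I
    have hdu' := hsplit u' I
    rw [← hIsd (G.neighborFinset u)] at hdu
    rw [← hIsd (G.neighborFinset u')] at hdu'
    have h1 := hU1 u hu
    have h2 := hU1 u' hu'
    have hdg := hdeg u u' hne hnadj
    omega
  -- u1 and u2 are adjacent
  have hadj12 : G.Adj u1 u2 := by
    by_contra hn12
    have hDge := pairD u1 u2 hu1I hu2I hu12 hn12
    have hTcard : (bootClosure G 2 {u1, u2}).card ≤ I.card := hImax _ (Finset.card_pair hu12)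
    have hu1T : u1 ∈ bootClosure G 2 {u1, u2} := seed _ (Finset.mem_insert_self _ _)
    have hu2T : u2 ∈ bootClosure G 2 {u1, u2} := seed _ (by simp)
    have hDT : ∀ d ∈ (G.neighborFinset u1 ∩ G.neighborFinset u2) ∩ (Finset.univ \ I),
        d ∈ bootClosure G 2 {u1, u2} := by
      intro d hd
      have hd1 : G.Adj u1 d := (SimpleGraph.mem_neighborFinset _ _ _).mp
        (Finset.mem_inter.mp (Finset.mem_inter.mp hd).1).1
      have hd2 : G.Adj u2 d := (SimpleGraph.mem_neighborFinset _ _ _).mp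
        (Finset.mem_inter.mp (Finset.mem_inter.mp hd).1).2
      exact key _ d (two_le _ u1 u2
        (Finset.mem_inter.mpr ⟨(SimpleGraph.mem_neighborFinset _ _ _).mpr hd1.symm, hu1T⟩)
        (Finset.mem_inter.mpr ⟨(SimpleGraph.mem_neighborFinset _ _ _).mpr hd2.symm, hu2T⟩) hu12)
    have hvT : v ∈ bootClosure G 2 {u1, u2} := key _ v (two_le _ u1 u2
        (Finset.mem_inter.mpr ⟨(SimpleGraph.mem_neighborFinset _ _ _).mpr hvu1, hu1T⟩)
        (Finset.mem_inter.mpr ⟨(SimpleGraph.mem_neighborFinset _ _ _).mpr hvu2, hu2T⟩) hu12)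
    have hsub : insert v (insert u1 (insert u2
        ((G.neighborFinset u1 ∩ G.neighborFinset u2) ∩ (Finset.univ \ I))))
        ⊆ bootClosure G 2 {u1, u2} := by
      intro x hx
      rcases Finset.mem_insert.mp hx with rfl | hx
      · exact hvT
      rcases Finset.mem_insert.mp hx with rfl | hx
      · exact hu1T
      rcases Finset.mem_insert.mp hx with rfl | hx
      · exact hu2T
      exact hDT _ hx
    have hu2D : u2 ∉ (G.neighborFinset u1 ∩ G.neighborFinset u2) ∩ (Finset.univ \ I) := by
      intro h
      exact G.loopless.irrefl u2 ((SimpleGraph.mem_neighborFinset _ _ _).mp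
        (Finset.mem_inter.mp (Finset.mem_inter.mp h).1).2)
    have hu1D : u1 ∉ insert u2
        ((G.neighborFinset u1 ∩ G.neighborFinset u2) ∩ (Finset.univ \ I)) := by
      intro h
      rcases Finset.mem_insert.mp h with h | h
      · exact hu12 h
      · exact G.loopless.irrefl u1 ((SimpleGraph.mem_neighborFinset _ _ _).mp
          (Finset.mem_inter.mp (Finset.mem_inter.mp h).1).1)
    have hvD : v ∉ insert u1 (insert u2
        ((G.neighborFinset u1 ∩ G.neighborFinset u2) ∩ (Finset.univ \ I))) := by
      intro h
      rcases Finset.mem_insert.mp h with h | h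
      · exact hu1I (h ▸ hv)
      rcases Finset.mem_insert.mp h with h | h
      · exact hu2I (h ▸ hv)
      · exact (Finset.mem_sdiff.mp (Finset.mem_inter.mp h).2).2 hv
    have hcard := Finset.card_le_card hsub
    rw [Finset.card_insert_of_notMem hvD, Finset.card_insert_of_notMem hu1D,
      Finset.card_insert_of_notMem hu2D] at hcard
    omega
  -- |I| ≥ 5 via the closure of {a, u1}
  have hane1 : a ≠ u1 := fun h => hu1I (h ▸ haI)
  have hWcard : (bootClosure G 2 {a, u1}).card ≤ I.card := hImax _ (Finset.card_pair hane1)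
  have haW : a ∈ bootClosure G 2 {a, u1} := seed _ (Finset.mem_insert_self _ _)
  have hu1W : u1 ∈ bootClosure G 2 {a, u1} := seed _ (by simp)
  have hvW : v ∈ bootClosure G 2 {a, u1} := key _ v (two_le _ a u1
    (Finset.mem_inter.mpr ⟨haN, haW⟩)
    (Finset.mem_inter.mpr ⟨(SimpleGraph.mem_neighborFinset _ _ _).mpr hvu1, hu1W⟩) hane1)
  have hbW : b ∈ bootClosure G 2 {a, u1} := key _ b (two_le _ a v
    (Finset.mem_inter.mpr ⟨(SimpleGraph.mem_neighborFinset _ _ _).mpr hab.symm, haW⟩)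
    (Finset.mem_inter.mpr ⟨(SimpleGraph.mem_neighborFinset _ _ _).mpr hvb.symm, hvW⟩) hva.ne')
  have hu2W : u2 ∈ bootClosure G 2 {a, u1} := key _ u2 (two_le _ v u1
    (Finset.mem_inter.mpr ⟨(SimpleGraph.mem_neighborFinset _ _ _).mpr hvu2.symm, hvW⟩)
    (Finset.mem_inter.mpr ⟨(SimpleGraph.mem_neighborFinset _ _ _).mpr hadj12.symm, hu1W⟩)
    (fun h => hu1I (h ▸ hv)))
  have hi5 : 5 ≤ I.card := by
    have hsub : ({v, a, b, u1, u2} : Finset V) ⊆ bootClosure G 2 {a, u1} := by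
      intro x hx
      simp only [Finset.mem_insert, Finset.mem_singleton] at hx
      rcases hx with rfl | rfl | rfl | rfl | rfl
      exacts [hvW, haW, hbW, hu1W, hu2W]
    refine le_trans ?_ (le_trans (Finset.card_le_card hsub) hWcard)
    have h1 : v ∉ ({a, b, u1, u2} : Finset V) := by
      simp only [Finset.mem_insert, Finset.mem_singleton]
      push_neg
      exact ⟨hva.ne, hvb.ne, fun h => hu1I (h ▸ hv), fun h => hu2I (h ▸ hv)⟩
    have h2 : a ∉ ({b, u1, u2} : Finset V) := by
      simp only [Finset.mem_insert, Finset.mem_singleton]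
      push_neg
      exact ⟨hab.ne, hane1, fun h => hu2I (h ▸ haI)⟩
    have h3 : b ∉ ({u1, u2} : Finset V) := by
      simp only [Finset.mem_insert, Finset.mem_singleton]
      push_neg
      exact ⟨fun h => hu1I (h ▸ hbI), fun h => hu2I (h ▸ hbI)⟩
    have h4 : u1 ∉ ({u2} : Finset V) := by simp [hu12]
    rw [Finset.card_insert_of_notMem h1, Finset.card_insert_of_notMem h2,
      Finset.card_insert_of_notMem h3, Finset.card_insert_of_notMem h4,
      Finset.card_singleton]
  by_cases hclq : ∀ p ∈ Finset.univ \ I, ∀ q ∈ Finset.univ \ I, p ≠ q → G.Adj p q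
  · -- U is a clique
    have hu1U : u1 ∈ Finset.univ \ I := Finset.mem_sdiff.mpr ⟨Finset.mem_univ _, hu1I⟩
    have hu2U : u2 ∈ Finset.univ \ I := Finset.mem_sdiff.mpr ⟨Finset.mem_univ _, hu2I⟩
    have hUW : Finset.univ \ I ⊆ bootClosure G 2 {a, u1} := by
      intro p hp
      by_cases hp1 : p = u1
      · exact hp1 ▸ hu1W
      by_cases hp2 : p = u2
      · exact hp2 ▸ hu2W
      have h1 : G.Adj p u1 := hclq p hp u1 hu1U hp1
      have h2 : G.Adj p u2 := hclq p hp u2 hu2U hp2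
      exact key _ p (two_le _ u1 u2
        (Finset.mem_inter.mpr ⟨(SimpleGraph.mem_neighborFinset _ _ _).mpr h1, hu1W⟩)
        (Finset.mem_inter.mpr ⟨(SimpleGraph.mem_neighborFinset _ _ _).mpr h2, hu2W⟩) hu12)
    have hWI : bootClosure G 2 {a, u1} \ I = Finset.univ \ I := by
      apply Finset.Subset.antisymm
      · intro x hx
        exact Finset.mem_sdiff.mpr ⟨Finset.mem_univ _, (Finset.mem_sdiff.mp hx).2⟩
      · intro x hx
        exact Finset.mem_sdiff.mpr ⟨hUW hx, (Finset.mem_sdiff.mp hx).2⟩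
    have hWsplit := Finset.card_inter_add_card_sdiff (bootClosure G 2 {a, u1}) I
    rw [hWI] at hWsplit
    have hIWsplit := Finset.card_inter_add_card_sdiff I (bootClosure G 2 {a, u1})
    have hIcomm : ((bootClosure G 2 {a, u1}) ∩ I).card
        = (I ∩ (bootClosure G 2 {a, u1})).card := by rw [Finset.inter_comm]
    have h3WI : 3 ≤ ((bootClosure G 2 {a, u1}) ∩ I).card := by
      have hsub : ({v, a, b} : Finset V) ⊆ (bootClosure G 2 {a, u1}) ∩ I := by
        intro x hx
        simp only [Finset.mem_insert, Finset.mem_singleton] at hx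
        rcases hx with rfl | rfl | rfl
        exacts [Finset.mem_inter.mpr ⟨hvW, hv⟩, Finset.mem_inter.mpr ⟨haW, haI⟩,
          Finset.mem_inter.mpr ⟨hbW, hbI⟩]
      refine le_trans ?_ (Finset.card_le_card hsub)
      have h1 : v ∉ ({a, b} : Finset V) := by
        simp only [Finset.mem_insert, Finset.mem_singleton]; push_neg
        exact ⟨hva.ne, hvb.ne⟩
      have h2 : a ∉ ({b} : Finset V) := by simp [hab.ne]
      rw [Finset.card_insert_of_notMem h1, Finset.card_insert_of_notMem h2,
        Finset.card_singleton]
    have hzex : (I \ bootClosure G 2 {a, u1}).Nonempty := by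
      rw [← Finset.card_pos]
      omega
    obtain ⟨z, hz⟩ := hzex
    have hzI : z ∈ I := (Finset.mem_sdiff.mp hz).1
    have hzW : z ∉ bootClosure G 2 {a, u1} := (Finset.mem_sdiff.mp hz).2
    have hzWnb : (G.neighborFinset z ∩ bootClosure G 2 {a, u1}).card ≤ 1 := by
      by_contra hc
      exact hzW (key _ z (by omega))
    have hzsplit := hsplit z (bootClosure G 2 {a, u1})
    have hzout : G.neighborFinset z \ bootClosure G 2 {a, u1}
        ⊆ (I \ bootClosure G 2 {a, u1}).erase z := by
      intro x hx
      obtain ⟨hx1, hx2⟩ := Finset.mem_sdiff.mp hx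
      have hxI : x ∈ I := by
        by_contra hxI
        exact hx2 (hUW (Finset.mem_sdiff.mpr ⟨Finset.mem_univ _, hxI⟩))
      refine Finset.mem_erase.mpr ⟨?_, Finset.mem_sdiff.mpr ⟨hxI, hx2⟩⟩
      intro h
      rw [h] at hx1
      exact G.loopless.irrefl z ((SimpleGraph.mem_neighborFinset _ _ _).mp hx1)
    have hzoutc := Finset.card_le_card hzout
    rw [Finset.card_erase_of_mem hz] at hzoutc
    have hz1 : 1 ≤ (I \ bootClosure G 2 {a, u1}).card := Finset.card_pos.mpr ⟨z, hz⟩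
    have hu1split := hsplit u1 I
    have hu1out : G.neighborFinset u1 \ I ⊆ (Finset.univ \ I).erase u1 := by
      intro x hx
      obtain ⟨hx1, hx2⟩ := Finset.mem_sdiff.mp hx
      refine Finset.mem_erase.mpr ⟨?_, Finset.mem_sdiff.mpr ⟨Finset.mem_univ _, hx2⟩⟩
      intro h
      rw [h] at hx1
      exact G.loopless.irrefl u1 ((SimpleGraph.mem_neighborFinset _ _ _).mp hx1)
    have hu1outc := Finset.card_le_card hu1out
    rw [Finset.card_erase_of_mem hu1U] at hu1outc
    have hu1Inb := hU1 u1 hu1I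
    have hnzu1 : ¬ G.Adj z u1 := by
      intro hadjz
      apply hu1I
      apply hIclosed u1
      exact two_le _ v z
        (Finset.mem_inter.mpr ⟨(SimpleGraph.mem_neighborFinset _ _ _).mpr hvu1.symm, hv⟩)
        (Finset.mem_inter.mpr ⟨(SimpleGraph.mem_neighborFinset _ _ _).mpr hadjz.symm, hzI⟩)
        (fun h => hzW (h ▸ hvW))
    have hzneu1 : z ≠ u1 := fun h => hu1I (h ▸ hzI)
    have hore := hdeg z u1 hzneu1 hnzu1
    omega
  · push_neg at hclq
    obtain ⟨u, hu, u', hu', hne, hnadj⟩ := hclq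
    have huI : u ∉ I := (Finset.mem_sdiff.mp hu).2
    have hu'I : u' ∉ I := (Finset.mem_sdiff.mp hu').2
    have hD := pairD u u' huI hu'I hne hnadj
    have hTcard : (bootClosure G 2 {u, u'}).card ≤ I.card := hImax _ (Finset.card_pair hne)
    have huT : u ∈ bootClosure G 2 {u, u'} := seed _ (Finset.mem_insert_self _ _)
    have hu'T : u' ∈ bootClosure G 2 {u, u'} := seed _ (by simp)
    have hDT : ∀ d ∈ (G.neighborFinset u ∩ G.neighborFinset u') ∩ (Finset.univ \ I),
        d ∈ bootClosure G 2 {u, u'} := by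
      intro d hd
      have hd1 : G.Adj u d := (SimpleGraph.mem_neighborFinset _ _ _).mp
        (Finset.mem_inter.mp (Finset.mem_inter.mp hd).1).1
      have hd2 : G.Adj u' d := (SimpleGraph.mem_neighborFinset _ _ _).mp
        (Finset.mem_inter.mp (Finset.mem_inter.mp hd).1).2
      exact key _ d (two_le _ u u'
        (Finset.mem_inter.mpr ⟨(SimpleGraph.mem_neighborFinset _ _ _).mpr hd1.symm, huT⟩)
        (Finset.mem_inter.mpr ⟨(SimpleGraph.mem_neighborFinset _ _ _).mpr hd2.symm, hu'T⟩) hne)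
    have hsubT : ({u, u'} : Finset V)
        ∪ ((G.neighborFinset u ∩ G.neighborFinset u') ∩ (Finset.univ \ I))
        ⊆ bootClosure G 2 {u, u'} := by
      intro x hx
      rcases Finset.mem_union.mp hx with hx | hx
      · rcases Finset.mem_insert.mp hx with rfl | hx
        · exact huT
        · rw [Finset.mem_singleton.mp hx]; exact hu'T
      · exact hDT _ hx
    have hdisj : Disjoint ({u, u'} : Finset V)
        ((G.neighborFinset u ∩ G.neighborFinset u') ∩ (Finset.univ \ I)) := by
      rw [Finset.disjoint_left]
      intro x hx hx2
      have h1 : G.Adj u x := (SimpleGraph.mem_neighborFinset _ _ _).mp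
        (Finset.mem_inter.mp (Finset.mem_inter.mp hx2).1).1
      have h2 : G.Adj u' x := (SimpleGraph.mem_neighborFinset _ _ _).mp
        (Finset.mem_inter.mp (Finset.mem_inter.mp hx2).1).2
      rcases Finset.mem_insert.mp hx with rfl | hx
      · exact G.loopless.irrefl x h1
      · rw [Finset.mem_singleton.mp hx] at h2
        exact G.loopless.irrefl u' h2
    have hucard : (({u, u'} : Finset V)
        ∪ ((G.neighborFinset u ∩ G.neighborFinset u') ∩ (Finset.univ \ I))).card
        = ((G.neighborFinset u ∩ G.neighborFinset u') ∩ (Finset.univ \ I)).card + 2 := by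
      rw [Finset.card_union_of_disjoint hdisj, Finset.card_pair hne, Nat.add_comm]
    have hTeq : bootClosure G 2 {u, u'} = ({u, u'} : Finset V)
        ∪ ((G.neighborFinset u ∩ G.neighborFinset u') ∩ (Finset.univ \ I)) :=
      (Finset.eq_of_subset_of_card_le hsubT (by omega)).symm
    have hTc2 : (bootClosure G 2 {u, u'}).card
        = ((G.neighborFinset u ∩ G.neighborFinset u') ∩ (Finset.univ \ I)).card + 2 := by
      rw [hTeq]
      exact hucard
    have hTU : bootClosure G 2 {u, u'} ⊆ Finset.univ \ I := by
      rw [hTeq]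
      intro x hx
      rcases Finset.mem_union.mp hx with hx | hx
      · rcases Finset.mem_insert.mp hx with rfl | hx
        · exact hu
        · rw [Finset.mem_singleton.mp hx]; exact hu'
      · exact (Finset.mem_inter.mp hx).2
    have hUTne : ((Finset.univ \ I) \ bootClosure G 2 {u, u'}).Nonempty := by
      by_contra hcon
      rw [Finset.not_nonempty_iff_eq_empty, Finset.sdiff_eq_empty_iff_subset] at hcon
      have hvT : v ∈ bootClosure G 2 {u, u'} := by
        apply key
        refine le_trans hv2 (Finset.card_le_card ?_)
        exact Finset.inter_subset_inter (Finset.Subset.refl _) hcon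
      exact (Finset.mem_sdiff.mp (hTU hvT)).2 hv
    obtain ⟨w, hw⟩ := hUTne
    have hwU : w ∈ Finset.univ \ I := (Finset.mem_sdiff.mp hw).1
    have hwI : w ∉ I := (Finset.mem_sdiff.mp hwU).2
    have hwT : w ∉ bootClosure G 2 {u, u'} := (Finset.mem_sdiff.mp hw).2
    -- the cover equality
    have hXY : (G.neighborFinset u ∩ (Finset.univ \ I))
        ∪ (G.neighborFinset u' ∩ (Finset.univ \ I))
        ⊆ (Finset.univ \ I) \ {u, u'} := by
      intro x hx
      have hxU : x ∈ Finset.univ \ I := by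
        rcases Finset.mem_union.mp hx with h | h
        · exact (Finset.mem_inter.mp h).2
        · exact (Finset.mem_inter.mp h).2
      refine Finset.mem_sdiff.mpr ⟨hxU, ?_⟩
      simp only [Finset.mem_insert, Finset.mem_singleton]
      push_neg
      constructor
      · rintro rfl
        rcases Finset.mem_union.mp hx with h | h
        · exact G.loopless.irrefl x ((SimpleGraph.mem_neighborFinset _ _ _).mp (Finset.mem_inter.mp h).1)
        · exact hnadj (((SimpleGraph.mem_neighborFinset _ _ _).mp (Finset.mem_inter.mp h).1).symm)
      · rintro rfl
        rcases Finset.mem_union.mp hx with h | h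
        · exact hnadj ((SimpleGraph.mem_neighborFinset _ _ _).mp (Finset.mem_inter.mp h).1)
        · exact G.loopless.irrefl x ((SimpleGraph.mem_neighborFinset _ _ _).mp (Finset.mem_inter.mp h).1)
    have hXuY := Finset.card_union_add_card_inter
      (G.neighborFinset u ∩ (Finset.univ \ I)) (G.neighborFinset u' ∩ (Finset.univ \ I))
    have hXiY : (G.neighborFinset u ∩ (Finset.univ \ I)) ∩ (G.neighborFinset u' ∩ (Finset.univ \ I))
        = (G.neighborFinset u ∩ G.neighborFinset u') ∩ (Finset.univ \ I) := by
      ext x; simp only [Finset.mem_inter]; tauto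
    rw [hXiY] at hXuY
    have hdu := hsplit u I
    have hdu' := hsplit u' I
    rw [← hIsd (G.neighborFinset u)] at hdu
    rw [← hIsd (G.neighborFinset u')] at hdu'
    have h1u := hU1 u huI
    have h2u := hU1 u' hu'I
    have hdg := hdeg u u' hne hnadj
    have hpairUV : ({u, u'} : Finset V) ⊆ Finset.univ \ I := by
      intro x hx
      rcases Finset.mem_insert.mp hx with rfl | hx
      · exact hu
      · rw [Finset.mem_singleton.mp hx]; exact hu'
    have hc2 : ((Finset.univ \ I) \ {u, u'}).card = (Finset.univ \ I).card - 2 := by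
      rw [Finset.card_sdiff_of_subset hpairUV, Finset.card_pair hne]
    have hcoveq : (G.neighborFinset u ∩ (Finset.univ \ I))
        ∪ (G.neighborFinset u' ∩ (Finset.univ \ I)) = (Finset.univ \ I) \ {u, u'} :=
      Finset.eq_of_subset_of_card_le hXY (by omega)
    have hcover : ∀ w', w' ∈ Finset.univ \ I → w' ∉ bootClosure G 2 {u, u'} →
        G.Adj u w' ∨ G.Adj u' w' := by
      intro w' h1 h2
      have hwm : w' ∈ (Finset.univ \ I) \ {u, u'} := by
        refine Finset.mem_sdiff.mpr ⟨h1, ?_⟩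
        simp only [Finset.mem_insert, Finset.mem_singleton]
        push_neg
        exact ⟨fun h => h2 (h ▸ huT), fun h => h2 (h ▸ hu'T)⟩
      rw [← hcoveq] at hwm
      rcases Finset.mem_union.mp hwm with h | h
      · exact Or.inl ((SimpleGraph.mem_neighborFinset _ _ _).mp (Finset.mem_inter.mp h).1)
      · exact Or.inr ((SimpleGraph.mem_neighborFinset _ _ _).mp (Finset.mem_inter.mp h).1)
    have hnoDC : ∀ w', w' ∈ Finset.univ \ I → w' ∉ bootClosure G 2 {u, u'} →
        ∀ c ∈ (G.neighborFinset u ∩ G.neighborFinset u') ∩ (Finset.univ \ I),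
        ¬ G.Adj w' c := by
      intro w' h1 h2 c hc hadjc
      have hcT : c ∈ bootClosure G 2 {u, u'} := hDT c hc
      have hcu : G.Adj u c := (SimpleGraph.mem_neighborFinset _ _ _).mp
        (Finset.mem_inter.mp (Finset.mem_inter.mp hc).1).1
      have hcu' : G.Adj u' c := (SimpleGraph.mem_neighborFinset _ _ _).mp
        (Finset.mem_inter.mp (Finset.mem_inter.mp hc).1).2
      apply h2
      rcases hcover w' h1 h2 with h | h
      · exact key _ w' (two_le _ u c
          (Finset.mem_inter.mpr ⟨(SimpleGraph.mem_neighborFinset _ _ _).mpr h.symm, huT⟩)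
          (Finset.mem_inter.mpr ⟨(SimpleGraph.mem_neighborFinset _ _ _).mpr hadjc, hcT⟩)
          hcu.ne)
      · exact key _ w' (two_le _ u' c
          (Finset.mem_inter.mpr ⟨(SimpleGraph.mem_neighborFinset _ _ _).mpr h.symm, hu'T⟩)
          (Finset.mem_inter.mpr ⟨(SimpleGraph.mem_neighborFinset _ _ _).mpr hadjc, hcT⟩)
          hcu'.ne)
    have hDne : ((G.neighborFinset u ∩ G.neighborFinset u') ∩ (Finset.univ \ I)).Nonempty := by
      rw [← Finset.card_pos]
      omega
    obtain ⟨c, hc⟩ := hDne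
    have hcT : c ∈ bootClosure G 2 {u, u'} := hDT c hc
    have hcI : c ∉ I := (Finset.mem_sdiff.mp (Finset.mem_inter.mp hc).2).2
    have hcsplit := hsplit c I
    have hcsub : G.neighborFinset c \ I ⊆ (bootClosure G 2 {u, u'}).erase c := by
      intro x hx
      obtain ⟨hx1, hx2⟩ := Finset.mem_sdiff.mp hx
      have hxU : x ∈ Finset.univ \ I := Finset.mem_sdiff.mpr ⟨Finset.mem_univ _, hx2⟩
      have hxT : x ∈ bootClosure G 2 {u, u'} := by
        by_contra hxT
        exact hnoDC x hxU hxT c hc ((SimpleGraph.mem_neighborFinset _ _ _).mp hx1).symm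
      refine Finset.mem_erase.mpr ⟨?_, hxT⟩
      intro h
      rw [h] at hx1
      exact G.loopless.irrefl c ((SimpleGraph.mem_neighborFinset _ _ _).mp hx1)
    have hcsubc := Finset.card_le_card hcsub
    rw [Finset.card_erase_of_mem hcT] at hcsubc
    have hc1 : 1 ≤ (bootClosure G 2 {u, u'}).card := Finset.card_pos.mpr ⟨c, hcT⟩
    have hcInb := hU1 c hcI
    have hwInb := hU1 w hwI
    have hwsplit := hsplit w I
    have hwsplit2 := Finset.card_inter_add_card_sdiff
      (G.neighborFinset w \ I) (bootClosure G 2 {u, u'})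
    have hwT1 : ((G.neighborFinset w \ I) ∩ bootClosure G 2 {u, u'}).card
        ≤ (G.neighborFinset w ∩ bootClosure G 2 {u, u'}).card :=
      Finset.card_le_card (Finset.inter_subset_inter Finset.sdiff_subset (Finset.Subset.refl _))
    have hwTnb : (G.neighborFinset w ∩ bootClosure G 2 {u, u'}).card ≤ 1 := by
      by_contra hcn
      exact hwT (key _ w (by omega))
    have hwout : (G.neighborFinset w \ I) \ bootClosure G 2 {u, u'}
        ⊆ ((Finset.univ \ I) \ bootClosure G 2 {u, u'}).erase w := by
      intro x hx
      obtain ⟨hx1, hx2⟩ := Finset.mem_sdiff.mp hx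
      obtain ⟨hx3, hx4⟩ := Finset.mem_sdiff.mp hx1
      refine Finset.mem_erase.mpr ⟨?_,
        Finset.mem_sdiff.mpr ⟨Finset.mem_sdiff.mpr ⟨Finset.mem_univ _, hx4⟩, hx2⟩⟩
      intro h
      rw [h] at hx3
      exact G.loopless.irrefl w ((SimpleGraph.mem_neighborFinset _ _ _).mp hx3)
    have hwoutc := Finset.card_le_card hwout
    rw [Finset.card_erase_of_mem hw] at hwoutc
    have hw1 : 1 ≤ ((Finset.univ \ I) \ bootClosure G 2 {u, u'}).card :=
      Finset.card_pos.mpr ⟨w, hw⟩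
    have hUTsplit := Finset.card_inter_add_card_sdiff
      (Finset.univ \ I) (bootClosure G 2 {u, u'})
    have hUTinter : (Finset.univ \ I) ∩ bootClosure G 2 {u, u'} = bootClosure G 2 {u, u'} :=
      Finset.inter_eq_right.mpr hTU
    rw [hUTinter] at hUTsplit
    have hwcne : w ≠ c := fun h => hwT (h ▸ hcT)
    have hwcnadj : ¬ G.Adj w c := hnoDC w hwU hwT c hc
    have hore := hdeg w c hwcne hwcnadj
    omega
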